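/- arXiv:cs/0211007 — 3 statements merged into one kernel-verified Lean document; each statement's English description precedes it below -/
import Mathlib

section
/- Let M be an ℓ×ℓ positive definite matrix with block inverse M⁻¹ = [[S_vv, S_vh],[S_vhᵀ, S_hh]] (S_vv of size n×n, S_hh of size m×m, n+m = ℓ), and let K_I be n×n positive definite. Then among all positive definite completions D = [[K_I, D_vh],[D_vhᵀ, D_hh]], the function D ↦ tr(DM⁻¹) − log det D is minimized by D_vh = −K_I S_vh S_hh⁻¹ and D_hh = S_hh⁻¹ + S_hh⁻¹ S_vhᵀ K_I S_vh S_hh⁻¹. -/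
open Matrix Real

section Helpers

variable {a b k : Type*} [Fintype a] [Fintype b] [Fintype k]
  [DecidableEq a] [DecidableEq b] [DecidableEq k]

private lemma eproj_trace_fromBlocks (A : Matrix a a ℝ) (B : Matrix a b ℝ)
    (C : Matrix b a ℝ) (D : Matrix b b ℝ) :
    (fromBlocks A B C D).trace = A.trace + D.trace := by
  simp [Matrix.trace, Matrix.diag, Fintype.sum_sum_type, fromBlocks]

private lemma eproj_posDef_toBlocks₂₂ {S : Matrix (a ⊕ b) (a ⊕ b) ℝ} (hS : S.PosDef) :
    S.toBlocks₂₂.PosDef := by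
  refine Matrix.PosDef.of_dotProduct_mulVec_pos (hS.1.submatrix Sum.inr) fun x hx => ?_
  have hy : (Sum.elim 0 x : a ⊕ b → ℝ) ≠ 0 := by
    intro h
    exact hx (funext fun i => congrFun h (Sum.inr i))
  have h2 := hS.dotProduct_mulVec_pos hy
  rw [← fromBlocks_toBlocks S, fromBlocks_mulVec] at h2
  simpa [sumElim_dotProduct_sumElim] using h2

private lemma eproj_posDef_conj {A B : Matrix k k ℝ} (hA : A.PosDef) (hB : IsUnit B.det) :
    (Bᴴ * A * B).PosDef := by
  refine Matrix.PosDef.of_dotProduct_mulVec_pos (isHermitian_conjTranspose_mul_mul _ hA.1) fun x hx => ?_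
  have hBx : B *ᵥ x ≠ 0 := by
    intro h
    have hinj : Function.Injective (B.mulVec) :=
      Matrix.mulVec_injective_iff_isUnit.mpr ((Matrix.isUnit_iff_isUnit_det _).mpr hB)
    exact hx (hinj (by simpa using h))
  simpa only [star_mulVec, dotProduct_mulVec, vecMul_vecMul, Matrix.mul_assoc]
    using hA.dotProduct_mulVec_pos hBx

private lemma eproj_posDef_fromBlocks_diag {A : Matrix a a ℝ} {D : Matrix b b ℝ}
    (hA : A.PosDef) (hD : D.PosDef) : (fromBlocks A 0 0 D).PosDef := by
  refine Matrix.PosDef.of_dotProduct_mulVec_pos ?_ ?_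
  · have : (fromBlocks A 0 0 D)ᴴ = fromBlocks Aᴴ 0 0 Dᴴ := by
      rw [fromBlocks_conjTranspose]; simp
    rw [Matrix.IsHermitian, this, hA.1.eq, hD.1.eq]
  · intro x hx
    have hxe : x = Sum.elim (x ∘ Sum.inl) (x ∘ Sum.inr) := (Sum.elim_comp_inl_inr x).symm
    have hsplit : (x ∘ Sum.inl) ≠ 0 ∨ (x ∘ Sum.inr) ≠ 0 := by
      by_contra h
      push_neg at h
      apply hx
      funext i
      cases i with
      | inl i => exact congrFun h.1 i
      | inr i => exact congrFun h.2 i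
    have hval : star x ⬝ᵥ ((fromBlocks A 0 0 D) *ᵥ x) =
        (x ∘ Sum.inl) ⬝ᵥ (A *ᵥ (x ∘ Sum.inl)) + (x ∘ Sum.inr) ⬝ᵥ (D *ᵥ (x ∘ Sum.inr)) := by
      rw [fromBlocks_mulVec, star_trivial]
      conv_lhs => rw [hxe]
      rw [sumElim_dotProduct_sumElim]
      simp
    rw [hval]
    rcases hsplit with h | h
    · have h1 := hA.dotProduct_mulVec_pos h
      have h2 := hD.posSemidef.dotProduct_mulVec_nonneg (x ∘ Sum.inr)
      simpa using add_pos_of_pos_of_nonneg h1 h2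
    · have h1 := hD.dotProduct_mulVec_pos h
      have h2 := hA.posSemidef.dotProduct_mulVec_nonneg (x ∘ Sum.inl)
      simpa using add_pos_of_nonneg_of_pos h2 h1

private lemma eproj_card_le {X : Matrix k k ℝ} (hX : X.PosDef) :
    (Fintype.card k : ℝ) ≤ X.trace - Real.log X.det := by
  have hlam : ∀ i, 0 < hX.1.eigenvalues i := hX.eigenvalues_pos
  have htr : X.trace = ∑ i, hX.1.eigenvalues i := by
    simpa using hX.1.trace_eq_sum_eigenvalues
  have hdet : X.det = ∏ i, hX.1.eigenvalues i := by
    simpa using hX.1.det_eq_prod_eigenvalues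
  rw [htr, hdet, Real.log_prod (fun i _ => (hlam i).ne'), ← Finset.sum_sub_distrib]
  calc (Fintype.card k : ℝ) = ∑ _i : k, (1 : ℝ) := by simp
  _ ≤ ∑ i, (hX.1.eigenvalues i - Real.log (hX.1.eigenvalues i)) := by
      refine Finset.sum_le_sum fun i _ => ?_
      have := Real.log_le_sub_one_of_pos (hlam i)
      linarith

open scoped MatrixOrder in
private lemma eproj_key {P Q : Matrix k k ℝ} (hP : P.PosDef) (hQ : Q.PosDef) :
    (Fintype.card k : ℝ) ≤ (Q * P).trace - Real.log Q.det - Real.log P.det := by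
  set s := CFC.sqrt P with hs
  have hs2 : s * s = P := CFC.sqrt_mul_sqrt_self P hP.posSemidef.nonneg
  have hsherm : s.IsHermitian := (CFC.sqrt_nonneg P).posSemidef.1
  have hdets : s.det * s.det = P.det := by rw [← det_mul, hs2]
  have hdetsu : IsUnit s.det := by
    refine isUnit_iff_ne_zero.mpr fun h => ?_
    rw [h, mul_zero] at hdets
    exact hP.det_pos.ne' hdets.symm
  have hX : (sᴴ * Q * s).PosDef := eproj_posDef_conj hQ hdetsu
  have h1 := eproj_card_le hX
  have htr : (sᴴ * Q * s).trace = (Q * P).trace := by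
    rw [hsherm.eq, Matrix.trace_mul_cycle, hs2, Matrix.trace_mul_comm]
  have hdet : (sᴴ * Q * s).det = Q.det * P.det := by
    rw [det_mul, det_mul, hsherm.eq, ← hdets]; ring
  rw [htr, hdet, Real.log_mul hQ.det_pos.ne' hP.det_pos.ne'] at h1
  linarith

end Helpers

theorem e_projection_minimizes (n m : ℕ)
    (M : Matrix (Fin n ⊕ Fin m) (Fin n ⊕ Fin m) ℝ) (hM : M.PosDef)
    (KI : Matrix (Fin n) (Fin n) ℝ) (hKI : KI.PosDef)
    (Svh : Matrix (Fin n) (Fin m) ℝ) (Shh : Matrix (Fin m) (Fin m) ℝ)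
    (hSvh : Svh = M⁻¹.toBlocks₁₂) (hShh : Shh = M⁻¹.toBlocks₂₂)
    (D₀ : Matrix (Fin n ⊕ Fin m) (Fin n ⊕ Fin m) ℝ)
    (hD₀ : D₀ = fromBlocks KI (-(KI * Svh * Shh⁻¹)) (-(KI * Svh * Shh⁻¹))ᵀ
        (Shh⁻¹ + Shh⁻¹ * Svhᵀ * KI * Svh * Shh⁻¹)) :
    D₀.PosDef ∧ D₀.toBlocks₁₁ = KI ∧
      ∀ D : Matrix (Fin n ⊕ Fin m) (Fin n ⊕ Fin m) ℝ,
        D.PosDef → D.toBlocks₁₁ = KI →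
          (D₀ * M⁻¹).trace - Real.log D₀.det ≤ (D * M⁻¹).trace - Real.log D.det := by
  set S := M⁻¹ with hSdef
  have hS : S.PosDef := hM.inv
  have hsymm : ∀ i j, S j i = S i j := by
    intro i j
    have := congrFun (congrFun hS.1.eq i) j
    simpa [Matrix.conjTranspose_apply] using this
  have hShpd : Shh.PosDef := by rw [hShh]; exact eproj_posDef_toBlocks₂₂ hS
  have hShT : Shhᵀ = Shh := by
    subst hShh; ext i j; exact hsymm _ _
  have hKIT : KIᵀ = KI := by
    have := hKI.1.eq
    rwa [conjTranspose_eq_transpose_of_trivial] at this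
  have hShinvT : Shh⁻¹ᵀ = Shh⁻¹ := by
    rw [Matrix.transpose_nonsing_inv, hShT]
  have hKIdet : IsUnit KI.det := hKI.det_pos.ne'.isUnit
  have hShdet : IsUnit Shh.det := hShpd.det_pos.ne'.isUnit
  have hKIi : KI * KI⁻¹ = 1 := Matrix.mul_nonsing_inv _ hKIdet
  have hKIi' : KI⁻¹ * KI = 1 := Matrix.nonsing_inv_mul _ hKIdet
  have hShi : Shh * Shh⁻¹ = 1 := Matrix.mul_nonsing_inv _ hShdet
  have hShi' : Shh⁻¹ * Shh = 1 := Matrix.nonsing_inv_mul _ hShdet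
  -- positive definiteness of D₀ via congruence with a block-diagonal matrix
  have hD₀pd : D₀.PosDef := by
    have hC : (fromBlocks KI 0 0 Shh⁻¹).PosDef :=
      eproj_posDef_fromBlocks_diag hKI hShpd.inv
    have hW : IsUnit (fromBlocks (1 : Matrix (Fin n) (Fin n) ℝ) (-(Svh * Shh⁻¹)) 0
        (1 : Matrix (Fin m) (Fin m) ℝ)).det := by
      rw [det_fromBlocks_zero₂₁]; simp
    have hfact := eproj_posDef_conj hC hW
    have heq : (fromBlocks (1 : Matrix (Fin n) (Fin n) ℝ) (-(Svh * Shh⁻¹)) 0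
          (1 : Matrix (Fin m) (Fin m) ℝ))ᴴ *
        (fromBlocks KI 0 0 Shh⁻¹) *
        (fromBlocks (1 : Matrix (Fin n) (Fin n) ℝ) (-(Svh * Shh⁻¹)) 0
          (1 : Matrix (Fin m) (Fin m) ℝ)) = D₀ := by
      rw [hD₀, fromBlocks_conjTranspose, fromBlocks_multiply, fromBlocks_multiply]
      rw [fromBlocks_inj]
      refine ⟨by simp, by simp [Matrix.mul_assoc], ?_, ?_⟩
      · simp [conjTranspose_eq_transpose_of_trivial, Matrix.transpose_mul, hShinvT, hKIT,
          Matrix.mul_assoc]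
      · simp [conjTranspose_eq_transpose_of_trivial, Matrix.transpose_mul, hShinvT, hKIT,
          Matrix.mul_assoc]
        try abel
    exact heq ▸ hfact
  refine ⟨hD₀pd, by simp [hD₀], ?_⟩
  -- the candidate inverse of D₀
  set E : Matrix (Fin n ⊕ Fin m) (Fin n ⊕ Fin m) ℝ :=
    fromBlocks (KI⁻¹ + Svh * Shh⁻¹ * Svhᵀ) Svh Svhᵀ Shh with hE
  have hDE : D₀ * E = 1 := by
    rw [hD₀, hE, fromBlocks_multiply, ← fromBlocks_one, fromBlocks_inj]
    refine ⟨?_, ?_, ?_, ?_⟩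
    · simp [Matrix.mul_add, Matrix.mul_assoc, hKIi]
    · simp [Matrix.mul_assoc, hShi']
    · simp [conjTranspose_eq_transpose_of_trivial, Matrix.transpose_mul, hShinvT, hKIT,
        Matrix.mul_add, Matrix.add_mul, Matrix.mul_assoc, hKIi]
      try abel
    · simp [conjTranspose_eq_transpose_of_trivial, Matrix.transpose_mul, hShinvT, hKIT,
        Matrix.mul_add, Matrix.add_mul, Matrix.mul_assoc, hShi']
      try abel
  have hEinv : D₀⁻¹ = E := Matrix.inv_eq_right_inv hDE
  have hEpd : E.PosDef := hEinv ▸ hD₀pd.inv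
  have hdetE : E.det = (D₀.det)⁻¹ := by
    have h := congrArg Matrix.det hDE
    rw [det_mul, det_one] at h
    exact eq_inv_of_mul_eq_one_left (by rw [mul_comm]; exact h)
  -- decomposition of S
  have hSdec : S = fromBlocks S.toBlocks₁₁ Svh Svhᵀ Shh := by
    have h21 : S.toBlocks₂₁ = Svhᵀ := by
      subst hSvh; ext i j
      exact hsymm _ _
    rw [← h21, hSvh, hShh]
    exact (fromBlocks_toBlocks S).symm
  -- trace identity
  have htr : ∀ D : Matrix (Fin n ⊕ Fin m) (Fin n ⊕ Fin m) ℝ, D.toBlocks₁₁ = KI →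
      (D * S).trace = (D * E).trace +
        ((KI * S.toBlocks₁₁).trace - (KI * (KI⁻¹ + Svh * Shh⁻¹ * Svhᵀ)).trace) := by
    intro D hD11
    conv_lhs => rw [← fromBlocks_toBlocks D, hD11, hSdec]
    conv_rhs => rw [← fromBlocks_toBlocks D, hD11, hE]
    rw [fromBlocks_multiply, fromBlocks_multiply,
      eproj_trace_fromBlocks, eproj_trace_fromBlocks]
    simp only [Matrix.trace_add]
    ring
  intro D hD hD11
  have hD₀11 : D₀.toBlocks₁₁ = KI := by simp [hD₀]
  rw [htr D₀ hD₀11, htr D hD11]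
  have htrD₀ : (D₀ * E).trace = (Fintype.card (Fin n ⊕ Fin m) : ℝ) := by
    rw [hDE, Matrix.trace_one]
  have hkey := eproj_key hEpd hD
  have hlogE : Real.log E.det = -Real.log D₀.det := by
    rw [hdetE, Real.log_inv]
  rw [hlogE] at hkey
  rw [htrD₀]
  linarith
end

section
/- If D₀ is the e-projection of M onto the m-flat data manifold 𝒟 (the minimizer over D ∈ 𝒟 of KL(D,M)), then for any D ∈ 𝒟 the Pythagorean relation KL(D,M) = KL(D,D₀) + KL(D₀,M) holds, where KL(P,Q) = tr(Q⁻¹P) + log det Q − log det P − d. -/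
open Matrix Real

/-- KL divergence between positive definite matrices (covariances of
zero-mean Gaussians), up to the factor 1/2. -/
noncomputable def klDiv {ι : Type*} [Fintype ι] [DecidableEq ι] (P Q : Matrix ι ι ℝ) : ℝ :=
  (Q⁻¹ * P).trace + Real.log Q.det - Real.log P.det - Fintype.card ι

lemma my_trace_fromBlocks {n m : Type*} [Fintype n] [Fintype m]
    (A : Matrix n n ℝ) (B : Matrix n m ℝ) (C : Matrix m n ℝ) (D : Matrix m m ℝ) :
    (fromBlocks A B C D).trace = A.trace + D.trace := by
  simp [Matrix.trace, Fintype.sum_sum_type, fromBlocks, Matrix.diag]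

lemma posdef_toBlocks₂₂ {n m : Type*} [Fintype n] [Fintype m]
    {A : Matrix (n ⊕ m) (n ⊕ m) ℝ} (hA : A.PosDef) : A.toBlocks₂₂.PosDef := by
  rw [posDef_iff_dotProduct_mulVec]
  constructor
  · have h := hA.1
    ext i j
    simpa [toBlocks₂₂] using congrFun (congrFun h (Sum.inr i)) (Sum.inr j)
  · intro x hx
    have hy : (Sum.elim (0 : n → ℝ) x) ≠ 0 := by
      intro h
      apply hx
      ext i
      simpa using congrFun h (Sum.inr i)
    have := (posDef_iff_dotProduct_mulVec.mp hA).2 hy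
    convert this using 2
    simp [dotProduct, Matrix.mulVec, Fintype.sum_sum_type, toBlocks₂₂]

theorem pythagorean_e_projection (n m : ℕ)
    (M : Matrix (Fin n ⊕ Fin m) (Fin n ⊕ Fin m) ℝ) (hM : M.PosDef)
    (KI : Matrix (Fin n) (Fin n) ℝ) (hKI : KI.PosDef)
    (Svh : Matrix (Fin n) (Fin m) ℝ) (Shh : Matrix (Fin m) (Fin m) ℝ)
    (hSvh : Svh = M⁻¹.toBlocks₁₂) (hShh : Shh = M⁻¹.toBlocks₂₂)
    (D₀ : Matrix (Fin n ⊕ Fin m) (Fin n ⊕ Fin m) ℝ)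
    (hD₀ : D₀ = fromBlocks KI (-(KI * Svh * Shh⁻¹)) (-(KI * Svh * Shh⁻¹))ᵀ
        (Shh⁻¹ + Shh⁻¹ * Svhᵀ * KI * Svh * Shh⁻¹)) :
    ∀ D : Matrix (Fin n ⊕ Fin m) (Fin n ⊕ Fin m) ℝ,
      D.PosDef → D.toBlocks₁₁ = KI →
        klDiv D M = klDiv D D₀ + klDiv D₀ M := by
  intro D hD hD11
  have hMinv : (M⁻¹).PosDef := hM.inv
  have hMsymm : (M⁻¹)ᵀ = M⁻¹ := by
    have h := hMinv.1
    simpa [Matrix.IsHermitian, Matrix.conjTranspose_eq_transpose_of_trivial] using h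
  have hShhP : Shh.PosDef := hShh ▸ posdef_toBlocks₂₂ hMinv
  have hShhT : Shhᵀ = Shh := by
    have h := hShhP.1
    simpa [Matrix.IsHermitian, Matrix.conjTranspose_eq_transpose_of_trivial] using h
  have hKIT : KIᵀ = KI := by
    have h := hKI.1
    simpa [Matrix.IsHermitian, Matrix.conjTranspose_eq_transpose_of_trivial] using h
  have hKIdet : IsUnit KI.det := isUnit_iff_ne_zero.mpr hKI.det_pos.ne'
  have hShhdet : IsUnit Shh.det := isUnit_iff_ne_zero.mpr hShhP.det_pos.ne'
  have hKIinv : KI * KI⁻¹ = 1 := Matrix.mul_nonsing_inv _ hKIdet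
  have hShhInv : Shh⁻¹ * Shh = 1 := Matrix.nonsing_inv_mul _ hShhdet
  have hShhInvT : (Shh⁻¹)ᵀ = Shh⁻¹ := by
    rw [Matrix.transpose_nonsing_inv, hShhT]
  -- M⁻¹ as blocks
  have hSvh21 : (M⁻¹.toBlocks₁₂)ᵀ = M⁻¹.toBlocks₂₁ := by
    ext i j
    exact congrFun (congrFun hMsymm (Sum.inr i)) (Sum.inl j)
  have hMblocks : M⁻¹ = fromBlocks (M⁻¹.toBlocks₁₁) Svh Svhᵀ Shh := by
    rw [hSvh, hShh, hSvh21, fromBlocks_toBlocks]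
  -- candidate inverse of D₀
  set N : Matrix (Fin n ⊕ Fin m) (Fin n ⊕ Fin m) ℝ :=
    fromBlocks (KI⁻¹ + Svh * Shh⁻¹ * Svhᵀ) Svh Svhᵀ Shh with hN
  have hD₀N : D₀ * N = 1 := by
    rw [hD₀, hN, fromBlocks_multiply, ← fromBlocks_one]
    simp only [Matrix.transpose_neg, Matrix.transpose_mul, hShhInvT, hKIT,
      Matrix.transpose_transpose, Matrix.neg_mul, Matrix.mul_add, Matrix.add_mul,
      Matrix.mul_assoc, hKIinv, hShhInv, Matrix.mul_one, Matrix.one_mul]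
    rw [Matrix.fromBlocks_inj]
    refine ⟨by abel, by abel, by abel, by abel⟩
  have hD₀inv : D₀⁻¹ = N := Matrix.inv_eq_right_inv hD₀N
  have hND₀ : N * D₀ = 1 := mul_eq_one_comm.mp hD₀N
  -- the "error" matrix
  set E0 : Matrix (Fin n) (Fin n) ℝ :=
    M⁻¹.toBlocks₁₁ - (KI⁻¹ + Svh * Shh⁻¹ * Svhᵀ) with hE0
  have hE : M⁻¹ = N + fromBlocks E0 0 0 0 := by
    rw [hN, hE0, fromBlocks_add, hMblocks]
    congr 1 <;> simp
  have key : ∀ P : Matrix (Fin n ⊕ Fin m) (Fin n ⊕ Fin m) ℝ, P.toBlocks₁₁ = KI →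
      (M⁻¹ * P).trace = (N * P).trace + (E0 * KI).trace := by
    intro P hP
    rw [hE, Matrix.add_mul, Matrix.trace_add]
    congr 1
    conv_lhs => rw [← fromBlocks_toBlocks P]
    rw [fromBlocks_multiply, my_trace_fromBlocks]
    simp [hP]
  have hkeyD := key D hD11
  have hD₀11 : D₀.toBlocks₁₁ = KI := by rw [hD₀]; rfl
  have hkeyD₀ := key D₀ hD₀11
  have htrN : (N * D₀).trace = Fintype.card (Fin n ⊕ Fin m) := by
    rw [hND₀, Matrix.trace_one]
  simp only [klDiv, hD₀inv]
  rw [hkeyD, hkeyD₀, htrN]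
  ring
end

section
/- Let K_I be n×n positive definite and let D₀ be the e-projection of a positive definite M onto the completion manifold (D_vh = −K_I S_vh S_hh⁻¹, D_hh = S_hh⁻¹ + S_hh⁻¹S_vhᵀK_I S_vh S_hh⁻¹). Then D₀ is positive definite and its Schur complement D_hh − D_vhᵀ K_I⁻¹ D_vh equals S_hh⁻¹. -/
open Matrix

theorem aux_posDef_toBlocks₂₂ {n m : ℕ}
    {M : Matrix (Fin n ⊕ Fin m) (Fin n ⊕ Fin m) ℝ} (hM : M.PosDef) :
    M.toBlocks₂₂.PosDef := by
  refine Matrix.PosDef.of_dotProduct_mulVec_pos ?_ ?_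
  · ext i j
    have := congrFun (congrFun hM.1 (Sum.inr i)) (Sum.inr j)
    simpa [toBlocks₂₂, conjTranspose, Matrix.transpose] using this
  · intro x hx
    have hy : (Sum.elim 0 x : Fin n ⊕ Fin m → ℝ) ≠ 0 := by
      intro h
      exact hx (funext fun i => congrFun h (Sum.inr i))
    have h := hM.dotProduct_mulVec_pos hy
    convert h using 1
    simp [dotProduct, mulVec, Fintype.sum_sum_type, toBlocks₂₂, Finset.mul_sum]

theorem aux_posDef_fromBlocks₁₁ {n m : ℕ} {A : Matrix (Fin n) (Fin n) ℝ}
    (B : Matrix (Fin n) (Fin m) ℝ) (D : Matrix (Fin m) (Fin m) ℝ)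
    (hA : A.PosDef) (hS : (D - Bᴴ * A⁻¹ * B).PosDef) :
    (fromBlocks A B Bᴴ D).PosDef := by
  haveI := hA.isUnit.invertible
  refine Matrix.PosDef.of_dotProduct_mulVec_pos ?_ ?_
  · exact (Matrix.IsHermitian.fromBlocks₁₁ B D hA.1).mpr hS.1
  · intro x hx
    rw [dotProduct_mulVec, ← Sum.elim_comp_inl_inr x,
      schur_complement_eq₁₁ B D _ _ hA.1]
    by_cases h2 : x ∘ Sum.inr = 0
    · have h1 : x ∘ Sum.inl ≠ 0 := by
        intro h1
        apply hx
        ext i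
        cases i with
        | inl a => exact congrFun h1 a
        | inr a => exact congrFun h2 a
      rw [h2]
      simp only [mulVec_zero, add_zero, star_zero, zero_vecMul, zero_dotProduct]
      rw [← dotProduct_mulVec]
      exact hA.dotProduct_mulVec_pos h1
    · have hpos : 0 < star (x ∘ Sum.inr) ᵥ* (D - Bᴴ * A⁻¹ * B) ⬝ᵥ (x ∘ Sum.inr) := by
        rw [← dotProduct_mulVec]
        exact hS.dotProduct_mulVec_pos h2
      have hnn : 0 ≤ star (x ∘ Sum.inl + (A⁻¹ * B) *ᵥ (x ∘ Sum.inr)) ᵥ* A ⬝ᵥ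
          (x ∘ Sum.inl + (A⁻¹ * B) *ᵥ (x ∘ Sum.inr)) := by
        rw [← dotProduct_mulVec]
        exact hA.posSemidef.dotProduct_mulVec_nonneg _
      linarith

theorem e_projection_posdef_schur (n m : ℕ)
    (M : Matrix (Fin n ⊕ Fin m) (Fin n ⊕ Fin m) ℝ) (hM : M.PosDef)
    (KI : Matrix (Fin n) (Fin n) ℝ) (hKI : KI.PosDef)
    (Svh : Matrix (Fin n) (Fin m) ℝ) (Shh : Matrix (Fin m) (Fin m) ℝ)
    (hSvh : Svh = M⁻¹.toBlocks₁₂) (hShh : Shh = M⁻¹.toBlocks₂₂)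
    (Dvh : Matrix (Fin n) (Fin m) ℝ) (Dhh : Matrix (Fin m) (Fin m) ℝ)
    (hDvh : Dvh = -(KI * Svh * Shh⁻¹))
    (hDhh : Dhh = Shh⁻¹ + Shh⁻¹ * Svhᵀ * KI * Svh * Shh⁻¹) :
    (fromBlocks KI Dvh Dvhᵀ Dhh).PosDef ∧ Dhh - Dvhᵀ * KI⁻¹ * Dvh = Shh⁻¹ := by
  haveI := hKI.isUnit.invertible
  have hShhPD : Shh.PosDef := by
    rw [hShh]; exact aux_posDef_toBlocks₂₂ hM.inv
  have hKIs : KIᵀ = KI := by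
    have := hKI.1
    ext i j
    exact congrFun (congrFun this i) j
  have hShhs : Shhᵀ = Shh := by
    have := hShhPD.1
    ext i j
    exact congrFun (congrFun this i) j
  have hTrans : Dvhᵀ = -(Shh⁻¹ * Svhᵀ * KI) := by
    rw [hDvh, transpose_neg, transpose_mul, transpose_mul, transpose_nonsing_inv,
      hKIs, hShhs, Matrix.mul_assoc]
  have hSchur : Dhh - Dvhᵀ * KI⁻¹ * Dvh = Shh⁻¹ := by
    rw [hDhh, hTrans, hDvh]
    have hc : KI⁻¹ * (KI * (Svh * Shh⁻¹)) = Svh * Shh⁻¹ :=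
      Matrix.inv_mul_cancel_left_of_invertible _ _
    simp only [Matrix.neg_mul, Matrix.mul_neg, neg_neg, Matrix.mul_assoc, hc]
    abel
  refine ⟨?_, hSchur⟩
  have hH : Dvhᴴ = Dvhᵀ := by
    ext i j
    simp [conjTranspose]
  have hSchur' : (Dhh - Dvhᴴ * KI⁻¹ * Dvh).PosDef := by
    rw [hH, hSchur]
    exact hShhPD.inv
  have := aux_posDef_fromBlocks₁₁ Dvh Dhh hKI hSchur'
  rwa [hH] at this
end
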